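/- Let X be the one-point compactification of ω₁ × ω₂ (ordinals with the order topology, product topology), with point at infinity ⋆. Then X is radial at ⋆: for every A ⊆ ω₁ × ω₂ with ⋆ ∈ closure(A), there is a transfinite sequence in A converging to ⋆. -/

import Mathlib

open Filter Topology Set

universe u v

/-- `x` has a neighbourhood base in the subspace `S` well-ordered by reverse inclusion. -/
def HasWONhdsBase {X : Type u} [TopologicalSpace X] (x : X) (S : Set X) : Prop :=
  ∃ (o : Ordinal.{u}) (B : ↥(Set.Iio o) → Set X),
    (∀ i, B i ⊆ S) ∧ (∀ i j, i ≤ j → B j ⊆ B i) ∧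
    (𝓝[S] x).HasBasis (fun _ => True) B

/-- `X` is radial at `x`. -/
def RadialAt (X : Type u) [TopologicalSpace X] (x : X) : Prop :=
  ∀ A : Set X, x ∈ closure A →
    ∃ (o : Ordinal.{u}) (f : ↥(Set.Iio o) → X), o ≠ 0 ∧
      (∀ i, f i ∈ A) ∧ Filter.Tendsto f Filter.atTop (𝓝 x)
/-- The first uncountable ordinal. -/
noncomputable def om1 : Ordinal.{0} := (Cardinal.aleph 1).ord
/-- The second uncountable ordinal. -/
noncomputable def om2 : Ordinal.{0} := (Cardinal.aleph 2).ord

/-- Compact sets in `Iio c` are bounded. -/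
lemma bdd_of_isCompact {c : Ordinal.{0}} (hc : 0 < c) {K : Set ↥(Set.Iio c)}
    (hK : IsCompact K) : ∃ a : ↥(Set.Iio c), ∀ x ∈ K, x ≤ a := by
  rcases K.eq_empty_or_nonempty with rfl | hne
  · exact ⟨⟨0, hc⟩, by simp⟩
  · have h1 : IsCompact (Subtype.val '' K) := hK.image continuous_subtype_val
    have h2 : sSup (Subtype.val '' K) ∈ Subtype.val '' K :=
      h1.sSup_mem (hne.image _)
    obtain ⟨a, -, ha⟩ := h2
    refine ⟨a, fun x hx => ?_⟩
    have : (x : Ordinal) ≤ sSup (Subtype.val '' K) :=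
      le_csSup h1.bddAbove (Set.mem_image_of_mem _ hx)
    rw [← ha] at this
    exact_mod_cast this

/-- `Iic` intervals in `Iio c` are compact. -/
lemma isCompact_Iic_sub {c : Ordinal.{0}} (a : ↥(Set.Iio c)) :
    IsCompact (Set.Iic a) := by
  rw [Subtype.isCompact_iff]
  have : Subtype.val '' (Set.Iic a) = Set.Icc 0 (a : Ordinal) := by
    ext x
    constructor
    · rintro ⟨y, hy, rfl⟩
      exact ⟨zero_le, hy⟩
    · rintro ⟨-, hx⟩
      exact ⟨⟨x, lt_of_le_of_lt hx a.2⟩, hx, rfl⟩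
  rw [this]
  exact isCompact_Icc

lemma isClosed_Iic_sub {c : Ordinal.{0}} (a : ↥(Set.Iio c)) :
    IsClosed (Set.Iic a) := by
  have : Set.Iic a = Subtype.val ⁻¹' (Set.Iic (a : Ordinal)) := by
    ext x; simp [Subtype.coe_le_coe]
  rw [this]
  exact isClosed_Iic.preimage continuous_subtype_val

/-- Main construction: if a coordinate of `A` is unbounded, we get a net converging to `∞`. -/
lemma main_aux {c : Ordinal.{0}} (hc : 0 < c) {Y : Type v} [TopologicalSpace Y]
    {p : Y → ↥(Set.Iio c)} (hp : Continuous p) {A : Set Y}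
    (h : ∀ a : ↥(Set.Iio c), ∃ x ∈ A, a < p x) :
    ∃ (o : Ordinal.{1}) (f : ↥(Set.Iio o) → OnePoint Y), o ≠ 0 ∧
      (∀ i, f i ∈ OnePoint.some '' A) ∧
      Filter.Tendsto f Filter.atTop (𝓝 OnePoint.infty) := by
  choose g hgA hglt using h
  have down_ex : ∀ i : ↥(Set.Iio (Ordinal.lift.{1} c)), ∃ a : ↥(Set.Iio c),
      Ordinal.lift.{1} (a : Ordinal) = (i : Ordinal) := by
    intro i
    obtain ⟨a, ha⟩ := Ordinal.mem_range_lift_of_le i.2.le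
    refine ⟨⟨a, ?_⟩, ha⟩
    have : Ordinal.lift.{1} a < Ordinal.lift.{1} c := by rw [ha]; exact i.2
    exact Ordinal.lift_lt.1 this
  choose down hdown using down_ex
  refine ⟨Ordinal.lift.{1} c, fun i => OnePoint.some (g (down i)), ?_, ?_, ?_⟩
  · have : (0 : Ordinal.{1}) < Ordinal.lift.{1} c := by
      have := Ordinal.lift_lt.{1,0}.2 hc
      rwa [Ordinal.lift_zero] at this
    exact this.ne'
  · intro i
    exact Set.mem_image_of_mem _ (hgA (down i))
  · have key : Tendsto (fun i => g (down i)) atTop (Filter.coclosedCompact Y) := by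
      rw [hasBasis_coclosedCompact.tendsto_right_iff]
      rintro K ⟨hKcl, hKcomp⟩
      obtain ⟨a, ha⟩ := bdd_of_isCompact hc (hKcomp.image hp)
      have hlt : Ordinal.lift.{1} (a : Ordinal) < Ordinal.lift.{1} c :=
        Ordinal.lift_lt.2 a.2
      filter_upwards [eventually_ge_atTop (⟨Ordinal.lift.{1} (a : Ordinal), hlt⟩ :
        ↥(Set.Iio (Ordinal.lift.{1} c)))] with i hi
      intro hK
      have h1 : p (g (down i)) ≤ a := ha _ (Set.mem_image_of_mem _ hK)
      have h2 : a ≤ down i := by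
        have : Ordinal.lift.{1} (a : Ordinal) ≤ Ordinal.lift.{1} ((down i : Ordinal)) := by
          rw [hdown i]
          exact_mod_cast hi
        exact_mod_cast Ordinal.lift_le.1 this
      exact absurd (lt_of_le_of_lt h2 (hglt (down i))) (not_lt.2 h1)
    rw [OnePoint.nhds_infty_eq]
    exact (tendsto_map.comp key).mono_right le_sup_left

theorem stmt5 :
    ∀ A : Set (↥(Set.Iio om1) × ↥(Set.Iio om2)),
      (OnePoint.infty : OnePoint (↥(Set.Iio om1) × ↥(Set.Iio om2))) ∈
          closure (OnePoint.some '' A) →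
      ∃ (o : Ordinal.{1}) (f : ↥(Set.Iio o) → OnePoint (↥(Set.Iio om1) × ↥(Set.Iio om2))),
        o ≠ 0 ∧ (∀ i, f i ∈ OnePoint.some '' A) ∧
        Filter.Tendsto f Filter.atTop (𝓝 OnePoint.infty) := by
  intro A hA
  have hc1 : (0 : Ordinal) < om1 := by
    rw [pos_iff_ne_zero]
    simp only [om1, ne_eq, Cardinal.ord_eq_zero]
    exact (Cardinal.aleph_pos 1).ne'
  have hc2 : (0 : Ordinal) < om2 := by
    rw [pos_iff_ne_zero]
    simp only [om2, ne_eq, Cardinal.ord_eq_zero]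
    exact (Cardinal.aleph_pos 2).ne'
  have key : ∀ (a : ↥(Set.Iio om1)) (b : ↥(Set.Iio om2)),
      ∃ x ∈ A, a < x.1 ∨ b < x.2 := by
    intro a b
    set K : Set (↥(Set.Iio om1) × ↥(Set.Iio om2)) := Set.Iic a ×ˢ Set.Iic b with hKdef
    have hKc : IsCompact K := (isCompact_Iic_sub a).prod (isCompact_Iic_sub b)
    have hKcl : IsClosed K := (isClosed_Iic_sub a).prod (isClosed_Iic_sub b)
    have hU : ((OnePoint.some '' K)ᶜ) ∈ 𝓝 (OnePoint.infty : OnePoint _) :=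
      (OnePoint.isOpen_compl_image_coe.2 ⟨hKcl, hKc⟩).mem_nhds
        (Set.mem_compl OnePoint.infty_notMem_image_coe)
    obtain ⟨y, hy1, hy2⟩ := mem_closure_iff_nhds.1 hA _ hU
    obtain ⟨x, hxA, rfl⟩ := hy2
    have hxK : x ∉ K := fun hk => hy1 (Set.mem_image_of_mem _ hk)
    rw [hKdef, Set.mem_prod, not_and_or] at hxK
    refine ⟨x, hxA, ?_⟩
    rcases hxK with h | h
    · exact Or.inl (not_le.1 h)
    · exact Or.inr (not_le.1 h)
  by_cases h1 : ∀ a : ↥(Set.Iio om1), ∃ x ∈ A, a < x.1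
  · exact main_aux (Y := ↥(Set.Iio om1) × ↥(Set.Iio om2)) (A := A) hc1 (p := Prod.fst) continuous_fst h1
  · push_neg at h1
    obtain ⟨a0, ha0⟩ := h1
    have h2 : ∀ b : ↥(Set.Iio om2), ∃ x ∈ A, b < x.2 := by
      intro b
      obtain ⟨x, hxA, hor⟩ := key a0 b
      rcases hor with h | h
      · exact absurd h (not_lt.2 (ha0 x hxA))
      · exact ⟨x, hxA, h⟩
    exact main_aux (Y := ↥(Set.Iio om1) × ↥(Set.Iio om2)) (A := A) hc2 (p := Prod.snd) continuous_snd h2
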